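/- Let x ∈ (0,1), α > 0, H ≥ 2 an integer, and n_1,…,n_H positive integers. On a probability space let G_1,…,G_H, G* be jointly independent real random variables with G_h distributed Gamma(n_h, 1) for each h and G* distributed Gamma(α, 1). Set T = G* + Σ_{h=1}^H G_h and π_h = G_h / T. Then for any two distinct indices r, s ∈ {1,…,H}: E[ ∏_{h=1}^H (max(1 − x/π_h, 0))^{n_h} ] ≤ E[ (max(1 − x/(π_r + π_s), 0))^{n_r + n_s} · ∏_{h ≠ r,s} (max(1 − x/π_h, 0))^{n_h} ]. (Equivalently: merging two clusters of a partition increases the survival probability P(u_min > x) of the minimum slice variable, since conditionally on weights (π_1,…,π_H, π*) ~ Dirichlet(n_1,…,n_H, α) and independent slice variables u_i ~ Uniform(0, π_{c_i}), one has P(u_min > x | ρ_n) = E[∏_h (max(1 − x/π_h,0))^{n_h}].) -/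

import Mathlib

open MeasureTheory ProbabilityTheory

lemma aux_gamma_Iic (a r : ℝ) : gammaMeasure a r (Set.Iic 0) = 0 := by
  rw [gammaMeasure, withDensity_apply _ measurableSet_Iic,
    setLIntegral_congr (Iio_ae_eq_Iic (a := (0:ℝ))).symm]
  exact lintegral_gammaPDF_of_nonpos le_rfl

lemma aux_pos {Ω : Type*} [MeasurableSpace Ω] {P : Measure Ω} {f : Ω → ℝ}
    (hf : Measurable f) {a r : ℝ} (hd : Measure.map f P = gammaMeasure a r) :
    ∀ᵐ ω ∂P, 0 < f ω := by
  have h0 : P (f ⁻¹' Set.Iic 0) = 0 := by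
    rw [← Measure.map_apply hf measurableSet_Iic, hd]; exact aux_gamma_Iic a r
  have hset : {ω | ¬ 0 < f ω} = f ⁻¹' Set.Iic 0 := by ext ω; simp [not_lt]
  rw [ae_iff, hset]; exact h0

lemma aux_mono {x u v : ℝ} (hx : 0 < x) (hu : 0 < u) (huv : u ≤ v) :
    max (1 - x / u) 0 ≤ max (1 - x / v) 0 := by
  apply max_le_max _ le_rfl
  have : x / v ≤ x / u := by gcongr
  linarith

lemma aux_le_one {x u : ℝ} (hx : 0 < x) (hu : 0 < u) : max (1 - x / u) 0 ≤ 1 := by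
  have := div_pos hx hu
  exact max_le (by linarith) zero_le_one

lemma aux_key {H : ℕ} {x : ℝ} (hx : 0 < x) (m : Fin H → ℕ) (g : Fin H → ℝ) (t : ℝ)
    (hg : ∀ h, 0 < g h) (ht : 0 < t) (r s : Fin H) (hrs : r ≠ s) :
    ∏ h, (max (1 - x / (g h / t)) 0) ^ m h
      ≤ (max (1 - x / ((g r + g s) / t)) 0) ^ (m r + m s)
        * ∏ h ∈ Finset.univ \ {r, s}, (max (1 - x / (g h / t)) 0) ^ m h := by
  set c := max (1 - x / ((g r + g s) / t)) 0 with hc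
  have hD : (0:ℝ) ≤ ∏ h ∈ Finset.univ \ {r, s}, (max (1 - x / (g h / t)) 0) ^ m h :=
    Finset.prod_nonneg fun h _ => pow_nonneg (le_max_right _ _) _
  have hsub : ({r, s} : Finset (Fin H)) ⊆ Finset.univ := Finset.subset_univ _
  rw [← Finset.prod_sdiff hsub, Finset.prod_pair hrs]
  rw [mul_comm]
  apply mul_le_mul_of_nonneg_right _ hD
  have hbr : max (1 - x / (g r / t)) 0 ≤ c :=
    aux_mono hx (div_pos (hg r) ht) ((div_le_div_iff_of_pos_right ht).2 (by linarith [hg s]))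
  have hbs : max (1 - x / (g s / t)) 0 ≤ c :=
    aux_mono hx (div_pos (hg s) ht) ((div_le_div_iff_of_pos_right ht).2 (by linarith [hg r]))
  calc (max (1 - x / (g r / t)) 0) ^ m r * (max (1 - x / (g s / t)) 0) ^ m s
      ≤ c ^ m r * c ^ m s := by
        apply mul_le_mul (pow_le_pow_left₀ (le_max_right _ _) hbr _)
          (pow_le_pow_left₀ (le_max_right _ _) hbs _)
          (pow_nonneg (le_max_right _ _) _) (pow_nonneg (le_max_right _ _) _)
    _ = c ^ (m r + m s) := (pow_add c (m r) (m s)).symm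

theorem stmt0 {Ω : Type*} [MeasurableSpace Ω] (P : Measure Ω) [IsProbabilityMeasure P]
    (x α : ℝ) (hx : x ∈ Set.Ioo (0:ℝ) 1) (hα : 0 < α)
    (H : ℕ) (hH : 2 ≤ H) (m : Fin H → ℕ) (hm : ∀ h, 0 < m h)
    (G : Fin H → Ω → ℝ) (Gstar : Ω → ℝ)
    (hGm : ∀ h, Measurable (G h)) (hGsm : Measurable Gstar)
    (hindep : iIndepFun
      (fun j : Option (Fin H) => Option.elim j Gstar G) P)
    (hGd : ∀ h, Measure.map (G h) P = gammaMeasure (m h) 1)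
    (hGsd : Measure.map Gstar P = gammaMeasure α 1)
    (r s : Fin H) (hrs : r ≠ s) :
    (∫ ω, ∏ h, (max (1 - x / (G h ω / (Gstar ω + ∑ h', G h' ω))) 0) ^ m h ∂P)
      ≤ ∫ ω,
          (max (1 - x / ((G r ω + G s ω) / (Gstar ω + ∑ h', G h' ω))) 0) ^ (m r + m s)
          * ∏ h ∈ Finset.univ \ {r, s},
              (max (1 - x / (G h ω / (Gstar ω + ∑ h', G h' ω))) 0) ^ m h ∂P := by
  obtain ⟨hx0, _⟩ := hx
  have hTm : Measurable fun ω => Gstar ω + ∑ h', G h' ω :=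
    hGsm.add (Finset.measurable_sum _ fun h' _ => hGm h')
  have hfm : Measurable fun ω =>
      ∏ h, (max (1 - x / (G h ω / (Gstar ω + ∑ h', G h' ω))) 0) ^ m h :=
    Finset.measurable_prod _ fun h _ =>
      (((measurable_const.sub (measurable_const.div ((hGm h).div hTm))).max
        measurable_const).pow_const _)
  have hgm : Measurable fun ω =>
      (max (1 - x / ((G r ω + G s ω) / (Gstar ω + ∑ h', G h' ω))) 0) ^ (m r + m s)
        * ∏ h ∈ Finset.univ \ {r, s},
            (max (1 - x / (G h ω / (Gstar ω + ∑ h', G h' ω))) 0) ^ m h := by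
    apply Measurable.mul
    · exact ((measurable_const.sub (measurable_const.div
        (((hGm r).add (hGm s)).div hTm))).max measurable_const).pow_const _
    · exact Finset.measurable_prod _ fun h _ =>
        (((measurable_const.sub (measurable_const.div ((hGm h).div hTm))).max
          measurable_const).pow_const _)
  have hpos : ∀ᵐ ω ∂P, 0 < Gstar ω ∧ ∀ h, 0 < G h ω :=
    (aux_pos hGsm hGsd).and (ae_all_iff.2 fun h => aux_pos (hGm h) (hGd h))
  have hT : ∀ ω, 0 < Gstar ω → (∀ h, 0 < G h ω) →
      0 < Gstar ω + ∑ h', G h' ω := fun ω h1 h2 =>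
    add_pos_of_pos_of_nonneg h1 (Finset.sum_nonneg fun h' _ => (h2 h').le)
  -- integrability
  have hbound_f : ∀ᵐ ω ∂P,
      ‖∏ h, (max (1 - x / (G h ω / (Gstar ω + ∑ h', G h' ω))) 0) ^ m h‖ ≤ 1 := by
    filter_upwards [hpos] with ω ⟨h1, h2⟩
    rw [Real.norm_eq_abs, abs_of_nonneg
      (Finset.prod_nonneg fun h _ => pow_nonneg (le_max_right _ _) _)]
    exact Finset.prod_le_one (fun h _ => pow_nonneg (le_max_right _ _) _)
      (fun h _ => pow_le_one₀ (le_max_right _ _)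
        (aux_le_one hx0 (div_pos (h2 h) (hT ω h1 h2))))
  have hbound_g : ∀ᵐ ω ∂P,
      ‖(max (1 - x / ((G r ω + G s ω) / (Gstar ω + ∑ h', G h' ω))) 0) ^ (m r + m s)
        * ∏ h ∈ Finset.univ \ {r, s},
            (max (1 - x / (G h ω / (Gstar ω + ∑ h', G h' ω))) 0) ^ m h‖ ≤ 1 := by
    filter_upwards [hpos] with ω ⟨h1, h2⟩
    have hD0 : (0:ℝ) ≤ ∏ h ∈ Finset.univ \ {r, s},
        (max (1 - x / (G h ω / (Gstar ω + ∑ h', G h' ω))) 0) ^ m h :=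
      Finset.prod_nonneg fun h _ => pow_nonneg (le_max_right _ _) _
    rw [Real.norm_eq_abs, abs_of_nonneg (mul_nonneg (pow_nonneg (le_max_right _ _) _) hD0)]
    have hc1 : (max (1 - x / ((G r ω + G s ω) / (Gstar ω + ∑ h', G h' ω))) 0) ^ (m r + m s) ≤ 1 :=
      pow_le_one₀ (le_max_right _ _)
        (aux_le_one hx0 (div_pos (add_pos (h2 r) (h2 s)) (hT ω h1 h2)))
    have hD1 : ∏ h ∈ Finset.univ \ {r, s},
        (max (1 - x / (G h ω / (Gstar ω + ∑ h', G h' ω))) 0) ^ m h ≤ 1 :=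
      Finset.prod_le_one (fun h _ => pow_nonneg (le_max_right _ _) _)
        (fun h _ => pow_le_one₀ (le_max_right _ _)
          (aux_le_one hx0 (div_pos (h2 h) (hT ω h1 h2))))
    calc _ ≤ 1 * 1 := mul_le_mul hc1 hD1 hD0 zero_le_one
      _ = 1 := one_mul 1
  have hf_int : Integrable (fun ω =>
      ∏ h, (max (1 - x / (G h ω / (Gstar ω + ∑ h', G h' ω))) 0) ^ m h) P :=
    (integrable_const (1:ℝ)).mono' hfm.aestronglyMeasurable hbound_f
  have hg_int : Integrable (fun ω =>
      (max (1 - x / ((G r ω + G s ω) / (Gstar ω + ∑ h', G h' ω))) 0) ^ (m r + m s)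
        * ∏ h ∈ Finset.univ \ {r, s},
            (max (1 - x / (G h ω / (Gstar ω + ∑ h', G h' ω))) 0) ^ m h) P :=
    (integrable_const (1:ℝ)).mono' hgm.aestronglyMeasurable hbound_g
  refine integral_mono_ae hf_int hg_int ?_
  filter_upwards [hpos] with ω ⟨h1, h2⟩
  exact aux_key hx0 m (fun h => G h ω) _ h2 (hT ω h1 h2) r s hrs
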